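/- Under the hypotheses of the autoregressive representation theorem (A diagonalizable with ‖Λ‖₂ ≤ 1, ‖B‖₂, ‖C‖₂ ≤ R_Θ, ‖Ψ‖_F‖Ψ^{-1}‖_F ≤ R_Ψ, and monic p with p(A) = 0 of degree τ with ‖p‖₁ ≤ R₁), the matrices P_i = Σ_{j=0}^{i} c_j C A^{i-j} B for 0 ≤ i ≤ τ-1 satisfy ‖P_i‖_F ≤ R₁ R_Θ² R_Ψ. -/

import Mathlib

/-- The Frobenius norm of a complex matrix. -/
noncomputable def frobNorm {p q : ℕ} (M : Matrix (Fin p) (Fin q) ℂ) : ℝ :=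
  Real.sqrt (∑ i, ∑ j, ‖M i j‖ ^ 2)

/-- The spectral (ℓ²-operator) norm of a complex matrix. -/
noncomputable def specNorm {p q : ℕ} (M : Matrix (Fin p) (Fin q) ℂ) : ℝ :=
  ‖LinearMap.toContinuousLinearMap (Matrix.toEuclideanLin M)‖

section FrobLemmas
open scoped Matrix

attribute [local instance] Matrix.frobeniusNormedAddCommGroup Matrix.frobeniusNormedSpace

lemma frobNorm_eq {a b : ℕ} (M : Matrix (Fin a) (Fin b) ℂ) : frobNorm M = ‖M‖ := by
  rw [frobNorm, Matrix.frobenius_norm_def, Real.sqrt_eq_rpow]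
  simp_rw [Real.rpow_two]

lemma frobNorm_nonneg {a b : ℕ} (M : Matrix (Fin a) (Fin b) ℂ) : 0 ≤ frobNorm M :=
  Real.sqrt_nonneg _

lemma frobNorm_conjTranspose {a b : ℕ} (M : Matrix (Fin a) (Fin b) ℂ) :
    frobNorm Mᴴ = frobNorm M := by
  rw [frobNorm_eq, frobNorm_eq, Matrix.frobenius_norm_conjTranspose]

lemma frobNorm_mul_le {a b d : ℕ} (M : Matrix (Fin a) (Fin b) ℂ) (N : Matrix (Fin b) (Fin d) ℂ) :
    frobNorm (M * N) ≤ frobNorm M * frobNorm N := by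
  rw [frobNorm_eq, frobNorm_eq, frobNorm_eq]
  exact Matrix.frobenius_norm_mul M N

lemma frobNorm_smul {a b : ℕ} (z : ℂ) (M : Matrix (Fin a) (Fin b) ℂ) :
    frobNorm (z • M) = ‖z‖ * frobNorm M := by
  rw [frobNorm_eq, frobNorm_eq, norm_smul]

lemma frobNorm_sum_le {a b : ℕ} {ι : Type*} (s : Finset ι)
    (f : ι → Matrix (Fin a) (Fin b) ℂ) :
    frobNorm (∑ i ∈ s, f i) ≤ ∑ i ∈ s, frobNorm (f i) := by
  simp_rw [frobNorm_eq]
  exact norm_sum_le s f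

end FrobLemmas

section SpecLemmas
open scoped Matrix

open scoped Matrix.Norms.L2Operator

lemma specNorm_eq {a b : ℕ} (M : Matrix (Fin a) (Fin b) ℂ) : specNorm M = ‖M‖ := rfl

lemma specNorm_nonneg {a b : ℕ} (M : Matrix (Fin a) (Fin b) ℂ) : 0 ≤ specNorm M := by
  rw [specNorm_eq]; exact norm_nonneg _

lemma specNorm_mul_le {a b d : ℕ} (M : Matrix (Fin a) (Fin b) ℂ) (N : Matrix (Fin b) (Fin d) ℂ) :
    specNorm (M * N) ≤ specNorm M * specNorm N := by
  simp_rw [specNorm_eq]; exact Matrix.l2_opNorm_mul M N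

lemma specNorm_conjTranspose {a b : ℕ} (M : Matrix (Fin a) (Fin b) ℂ) :
    specNorm Mᴴ = specNorm M := by
  simp_rw [specNorm_eq]; exact Matrix.l2_opNorm_conjTranspose M

lemma specNorm_one_le {a : ℕ} : specNorm (1 : Matrix (Fin a) (Fin a) ℂ) ≤ 1 := by
  rw [specNorm_eq, Matrix.cstar_norm_def, map_one]
  exact ContinuousLinearMap.norm_id_le

lemma specNorm_pow_le_one {a : ℕ} (Λ : Matrix (Fin a) (Fin a) ℂ) (h : specNorm Λ ≤ 1) :
    ∀ k, specNorm (Λ ^ k) ≤ 1 := by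
  intro k
  induction k with
  | zero => simpa using specNorm_one_le
  | succ k ih =>
    rw [pow_succ]
    calc specNorm (Λ ^ k * Λ) ≤ specNorm (Λ ^ k) * specNorm Λ := specNorm_mul_le _ _
      _ ≤ 1 * 1 := mul_le_mul ih h (specNorm_nonneg _) zero_le_one
      _ = 1 := one_mul 1

lemma mulVec_sq_sum_le {a b : ℕ} (M : Matrix (Fin a) (Fin b) ℂ) (x : Fin b → ℂ) :
    ∑ i, ‖(M *ᵥ x) i‖ ^ 2 ≤ specNorm M ^ 2 * ∑ j, ‖x j‖ ^ 2 := by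
  have h := Matrix.l2_opNorm_mulVec M ((WithLp.equiv 2 (Fin b → ℂ)).symm x)
  have hl : ‖(EuclideanSpace.equiv (Fin a) ℂ).symm
      (M *ᵥ ((WithLp.equiv 2 (Fin b → ℂ)).symm x).ofLp)‖
      = Real.sqrt (∑ i, ‖(M *ᵥ x) i‖ ^ 2) := by
    rw [EuclideanSpace.norm_eq]
    simp [EuclideanSpace.equiv,
      Matrix.mulVec, dotProduct]
  have hr : ‖(WithLp.equiv 2 (Fin b → ℂ)).symm x‖
      = Real.sqrt (∑ j, ‖x j‖ ^ 2) := by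
    rw [EuclideanSpace.norm_eq]
    simp
  rw [hl, hr, ← specNorm_eq] at h
  have h1 : (0:ℝ) ≤ ∑ i, ‖(M *ᵥ x) i‖ ^ 2 :=
    Finset.sum_nonneg fun _ _ => sq_nonneg _
  have h2 : (0:ℝ) ≤ ∑ j, ‖x j‖ ^ 2 :=
    Finset.sum_nonneg fun _ _ => sq_nonneg _
  calc ∑ i, ‖(M *ᵥ x) i‖ ^ 2
      = Real.sqrt (∑ i, ‖(M *ᵥ x) i‖ ^ 2) ^ 2 := (Real.sq_sqrt h1).symm
    _ ≤ (specNorm M * Real.sqrt (∑ j, ‖x j‖ ^ 2)) ^ 2 := by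
        apply pow_le_pow_left₀ (Real.sqrt_nonneg _) h
    _ = specNorm M ^ 2 * ∑ j, ‖x j‖ ^ 2 := by
        rw [mul_pow, Real.sq_sqrt h2]

lemma frobNorm_mul_le_spec_left {a b d : ℕ} (M : Matrix (Fin a) (Fin b) ℂ)
    (N : Matrix (Fin b) (Fin d) ℂ) :
    frobNorm (M * N) ≤ specNorm M * frobNorm N := by
  have key : ∑ i, ∑ k, ‖(M * N) i k‖ ^ 2
      ≤ specNorm M ^ 2 * ∑ j, ∑ k, ‖N j k‖ ^ 2 := by
    rw [Finset.sum_comm]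
    have : ∀ k : Fin d, ∑ i, ‖(M * N) i k‖ ^ 2
        ≤ specNorm M ^ 2 * ∑ j, ‖N j k‖ ^ 2 := by
      intro k
      have := mulVec_sq_sum_le M (fun j => N j k)
      simpa [Matrix.mul_apply, Matrix.mulVec, dotProduct] using this
    calc ∑ k, ∑ i, ‖(M * N) i k‖ ^ 2
        ≤ ∑ k, specNorm M ^ 2 * ∑ j, ‖N j k‖ ^ 2 :=
          Finset.sum_le_sum fun k _ => this k
      _ = specNorm M ^ 2 * ∑ k, ∑ j, ‖N j k‖ ^ 2 := by
          rw [Finset.mul_sum]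
      _ = specNorm M ^ 2 * ∑ j, ∑ k, ‖N j k‖ ^ 2 := by
          rw [Finset.sum_comm]
  rw [frobNorm, frobNorm]
  calc Real.sqrt (∑ i, ∑ k, ‖(M * N) i k‖ ^ 2)
      ≤ Real.sqrt (specNorm M ^ 2 * ∑ j, ∑ k, ‖N j k‖ ^ 2) :=
        Real.sqrt_le_sqrt key
    _ = specNorm M * Real.sqrt (∑ j, ∑ k, ‖N j k‖ ^ 2) := by
        rw [Real.sqrt_mul (sq_nonneg _), Real.sqrt_sq (specNorm_nonneg M)]

lemma frobNorm_mul_le_spec_right {a b d : ℕ} (M : Matrix (Fin a) (Fin b) ℂ)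
    (N : Matrix (Fin b) (Fin d) ℂ) :
    frobNorm (M * N) ≤ frobNorm M * specNorm N := by
  have : frobNorm ((M * N)ᴴ) ≤ specNorm Nᴴ * frobNorm Mᴴ := by
    rw [Matrix.conjTranspose_mul]
    exact frobNorm_mul_le_spec_left _ _
  rw [frobNorm_conjTranspose, specNorm_conjTranspose, frobNorm_conjTranspose] at this
  linarith

end SpecLemmas

theorem autoregressive_coefficient_matrices_bound
    (n m p τ : ℕ) (R_Θ R_Ψ R₁ : ℝ)
    (A Ψ Λ : Matrix (Fin n) (Fin n) ℂ)
    (B : Matrix (Fin n) (Fin m) ℂ)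
    (C : Matrix (Fin p) (Fin n) ℂ)
    (c : ℕ → ℂ) (hc0 : c 0 = 1)
    (hpA : (∑ j ∈ Finset.range (τ + 1), c j • A ^ (τ - j)) = 0)
    (hc1 : (∑ j ∈ Finset.range (τ + 1), ‖c j‖) ≤ R₁)
    (hΨ : IsUnit Ψ)
    (hA : A = Ψ * Λ * Ψ⁻¹)
    (hΛdiag : Λ.IsDiag)
    (hΛ : specNorm Λ ≤ 1)
    (hB : specNorm B ≤ R_Θ)
    (hC : specNorm C ≤ R_Θ)
    (hΨnorm : frobNorm Ψ * frobNorm Ψ⁻¹ ≤ R_Ψ) :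
    ∀ i < τ,
      frobNorm (∑ j ∈ Finset.range (i + 1), c j • (C * A ^ (i - j) * B)) ≤
        R₁ * R_Θ ^ 2 * R_Ψ := by
  intro i hi
  have hdet : IsUnit Ψ.det := (Matrix.isUnit_iff_isUnit_det Ψ).mp hΨ
  have hinv : Ψ⁻¹ * Ψ = 1 := Matrix.nonsing_inv_mul Ψ hdet
  have hinv' : Ψ * Ψ⁻¹ = 1 := Matrix.mul_nonsing_inv Ψ hdet
  have hRΘ : 0 ≤ R_Θ := le_trans (specNorm_nonneg B) hB
  have hRΨ : 0 ≤ R_Ψ := le_trans (mul_nonneg (frobNorm_nonneg _) (frobNorm_nonneg _)) hΨnorm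
  have hAk : ∀ k, A ^ k = Ψ * Λ ^ k * Ψ⁻¹ := by
    intro k
    induction k with
    | zero => simp [hinv']
    | succ k ih =>
      rw [pow_succ, pow_succ, ih, hA]
      calc Ψ * Λ ^ k * Ψ⁻¹ * (Ψ * Λ * Ψ⁻¹)
          = Ψ * Λ ^ k * (Ψ⁻¹ * Ψ) * Λ * Ψ⁻¹ := by
            simp only [Matrix.mul_assoc]
        _ = Ψ * (Λ ^ k * Λ) * Ψ⁻¹ := by rw [hinv]; simp only [Matrix.mul_one, Matrix.mul_assoc]
  have key : ∀ k, frobNorm (C * A ^ k * B) ≤ R_Θ ^ 2 * R_Ψ := by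
    intro k
    rw [hAk k]
    have e1 : frobNorm (C * (Ψ * Λ ^ k * Ψ⁻¹) * B)
        ≤ frobNorm (C * (Ψ * Λ ^ k * Ψ⁻¹)) * specNorm B := frobNorm_mul_le_spec_right _ _
    have e2 : frobNorm (C * (Ψ * Λ ^ k * Ψ⁻¹)) ≤ specNorm C * frobNorm (Ψ * Λ ^ k * Ψ⁻¹) :=
      frobNorm_mul_le_spec_left _ _
    have e3 : frobNorm (Ψ * Λ ^ k * Ψ⁻¹) ≤ frobNorm Ψ * frobNorm (Λ ^ k * Ψ⁻¹) := by
      rw [Matrix.mul_assoc]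
      exact frobNorm_mul_le _ _
    have e4 : frobNorm (Λ ^ k * Ψ⁻¹) ≤ specNorm (Λ ^ k) * frobNorm Ψ⁻¹ :=
      frobNorm_mul_le_spec_left _ _
    have e5 : specNorm (Λ ^ k) ≤ 1 := specNorm_pow_le_one Λ hΛ k
    have nC := specNorm_nonneg C
    have nB := specNorm_nonneg B
    have nΨ := frobNorm_nonneg Ψ
    have nΨi := frobNorm_nonneg Ψ⁻¹
    have nX := frobNorm_nonneg (Ψ * Λ ^ k * Ψ⁻¹)
    have nCX := frobNorm_nonneg (C * (Ψ * Λ ^ k * Ψ⁻¹))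
    have nLk := specNorm_nonneg (Λ ^ k)
    have nLΨ := frobNorm_nonneg (Λ ^ k * Ψ⁻¹)
    have h6 : frobNorm (Λ ^ k * Ψ⁻¹) ≤ frobNorm Ψ⁻¹ := by nlinarith
    have h7 : frobNorm (Ψ * Λ ^ k * Ψ⁻¹) ≤ R_Ψ := by nlinarith
    calc frobNorm (C * (Ψ * Λ ^ k * Ψ⁻¹) * B)
        ≤ frobNorm (C * (Ψ * Λ ^ k * Ψ⁻¹)) * specNorm B := e1
      _ ≤ (specNorm C * frobNorm (Ψ * Λ ^ k * Ψ⁻¹)) * specNorm B :=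
          mul_le_mul_of_nonneg_right e2 nB
      _ ≤ (R_Θ * R_Ψ) * R_Θ :=
          mul_le_mul (mul_le_mul hC h7 nX hRΘ) hB nB (mul_nonneg hRΘ hRΨ)
      _ = R_Θ ^ 2 * R_Ψ := by ring
  have habs : ∀ j, 0 ≤ ‖c j‖ := fun j => norm_nonneg _
  have hsum : (∑ j ∈ Finset.range (i + 1), ‖c j‖) ≤ R₁ := by
    refine le_trans ?_ hc1
    apply Finset.sum_le_sum_of_subset_of_nonneg
    · exact Finset.range_subset_range.mpr (by omega)
    · intro j _ _; exact habs j
  calc frobNorm (∑ j ∈ Finset.range (i + 1), c j • (C * A ^ (i - j) * B))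
      ≤ ∑ j ∈ Finset.range (i + 1), frobNorm (c j • (C * A ^ (i - j) * B)) :=
        frobNorm_sum_le _ _
    _ = ∑ j ∈ Finset.range (i + 1), ‖c j‖ * frobNorm (C * A ^ (i - j) * B) := by
        refine Finset.sum_congr rfl fun j _ => ?_
        exact frobNorm_smul _ _
    _ ≤ ∑ j ∈ Finset.range (i + 1), ‖c j‖ * (R_Θ ^ 2 * R_Ψ) :=
        Finset.sum_le_sum fun j _ => mul_le_mul_of_nonneg_left (key _) (habs j)
    _ = (∑ j ∈ Finset.range (i + 1), ‖c j‖) * (R_Θ ^ 2 * R_Ψ) := by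
        rw [Finset.sum_mul]
    _ ≤ R₁ * (R_Θ ^ 2 * R_Ψ) :=
        mul_le_mul_of_nonneg_right hsum (by positivity)
    _ = R₁ * R_Θ ^ 2 * R_Ψ := by ring
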